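/- Let r ∈ ℕ, let ⟨F_n⟩_{n=1}^∞ be a sequence of finite nonempty subsets of ℕ with max F_n < min F_{n+1} for each n ∈ ℕ, and let A₁,…,A_r ⊆ P_f(ℕ) be such that ⋃_{n∈G} F_n ∈ A₁ ∪ … ∪ A_r for every finite nonempty set G ⊆ ℕ. Then there exist i ∈ {1,…,r} and a sequence ⟨G_n⟩_{n=1}^∞ of finite nonempty subsets of ℕ with max G_n < min G_{n+1} for each n ∈ ℕ, each G_n a finite union of the sets F_m, such that ⋃_{n∈H} G_n ∈ A_i for every finite nonempty set H ⊆ ℕ. -/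

import Mathlib

private noncomputable def eFun (s : Finset ℕ) : ℕ →₀ ℕ := ∑ i ∈ s, Finsupp.single i 1

private lemma eFun_apply (s : Finset ℕ) (x : ℕ) : eFun s x = if x ∈ s then 1 else 0 := by
  classical
  simp [eFun, Finset.sum_apply', Finsupp.single_apply]

private lemma eFun_injective : Function.Injective eFun := by
  intro s t h
  ext x
  have := DFunLike.congr_fun h x
  rw [eFun_apply, eFun_apply] at this
  by_cases hs : x ∈ s <;> by_cases ht : x ∈ t <;> simp [hs, ht] at this ⊢

private lemma eFun_add_eq (s t u : Finset ℕ) (h : eFun s + eFun t = eFun u) :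
    Disjoint s t := by
  rw [Finset.disjoint_left]
  intro x hs ht
  have := DFunLike.congr_fun h x
  rw [Finsupp.add_apply, eFun_apply, eFun_apply, eFun_apply] at this
  simp [hs, ht] at this
  split_ifs at this <;> omega

private lemma eFun_biUnion (s : Finset ℕ) (t : ℕ → Finset ℕ)
    (h : (↑s : Set ℕ).PairwiseDisjoint t) :
    eFun (s.biUnion t) = ∑ i ∈ s, eFun (t i) := by
  classical
  simp only [eFun]
  exact Finset.sum_biUnion h

private lemma FS_exists_finset {M} [AddCommMonoid M] {a : Stream' M} {m : M}
    (h : m ∈ Hindman.FS a) : ∃ s : Finset ℕ, s.Nonempty ∧ m = ∑ i ∈ s, a.get i := by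
  induction' h with a a m h ih a m h ih
  · exact ⟨{0}, Finset.singleton_nonempty 0, by simp [Stream'.head]⟩
  · obtain ⟨s, hs, rfl⟩ := ih
    refine ⟨s.image (· + 1), hs.image _, ?_⟩
    rw [Finset.sum_image (by intro x _ y _ h; simpa using h)]
    simp [Stream'.get_tail]
  · obtain ⟨s, hs, rfl⟩ := ih
    refine ⟨insert 0 (s.image (· + 1)), Finset.insert_nonempty _ _, ?_⟩
    rw [Finset.sum_insert (by simp), Finset.sum_image (by intro x _ y _ h; simpa using h)]
    simp [Stream'.get_tail, Stream'.head]

private lemma chain_lt (F : ℕ → Finset ℕ) (hF : ∀ n, (F n).Nonempty)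
    (hFsep : ∀ n, ∀ a ∈ F n, ∀ b ∈ F (n + 1), a < b) :
    ∀ n m : ℕ, n < m → ∀ x ∈ F n, ∀ y ∈ F m, x < y := by
  intro n m h
  induction m with
  | zero => omega
  | succ m ih =>
    intro x hx y hy
    rcases Nat.lt_succ_iff_lt_or_eq.mp h with h' | h'
    · obtain ⟨z, hz⟩ := hF m
      exact (ih h' x hx z hz).trans (hFsep m z hz y hy)
    · subst h'
      exact hFsep n x hx y hy

/-- Hindman's finite unions theorem, relative version: if `⟨F_n⟩` is a sequence of
nonempty finite subsets of `ℕ` with `max F_n < min F_{n+1}` for each `n`, and all finite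
unions `⋃_{n ∈ G} F_n` lie in `A₁ ∪ … ∪ A_r`, then there are `i` and a sequence `⟨G_n⟩`
of nonempty finite subsets of `ℕ` with `max G_n < min G_{n+1}`, each `G_n` being a finite
union of the `F_m` (here `G_n = ⋃_{m ∈ K_n} F_m`), such that all finite unions of the
`G_n` lie in `A_i`. -/
theorem hindman_finite_unions_relative (r : ℕ) (hr : 0 < r)
    (F : ℕ → Finset ℕ) (hF : ∀ n, (F n).Nonempty)
    (hFsep : ∀ n, ∀ a ∈ F n, ∀ b ∈ F (n + 1), a < b)
    (A : Fin r → Set (Finset ℕ))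
    (hcover : ∀ G : Finset ℕ, G.Nonempty → ∃ i, G.biUnion F ∈ A i) :
    ∃ i : Fin r, ∃ K : ℕ → Finset ℕ, (∀ n, (K n).Nonempty) ∧
      (∀ n, ∀ a ∈ (K n).biUnion F, ∀ b ∈ (K (n + 1)).biUnion F, a < b) ∧
      ∀ H : Finset ℕ, H.Nonempty → H.biUnion (fun n => (K n).biUnion F) ∈ A i := by
  classical
  have hFchain : ∀ {n m : ℕ}, n < m → ∀ x ∈ F n, ∀ y ∈ F m, x < y :=
    fun {n m} => chain_lt F hF hFsep n m
  have hFdisj : ∀ {n m : ℕ}, n ≠ m → Disjoint (F n) (F m) := by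
    intro n m hnm
    rw [Finset.disjoint_left]
    intro x hx hx'
    rcases hnm.lt_or_gt with h | h
    · exact absurd (hFchain h x hx x hx') (lt_irrefl x)
    · exact absurd (hFchain h x hx' x hx) (lt_irrefl x)
  set a : Stream' (ℕ →₀ ℕ) := fun n => eFun (F n) with ha
  have hsum : ∀ s : Finset ℕ, ∑ i ∈ s, a.get i = eFun (s.biUnion F) := by
    intro s
    rw [eFun_biUnion s F (fun x _ y _ hxy => hFdisj hxy)]
    rfl
  set c : Fin r → Set (ℕ →₀ ℕ) := fun i =>
    {f | ∃ G : Finset ℕ, G.Nonempty ∧ f = eFun (G.biUnion F) ∧ G.biUnion F ∈ A i} with hc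
  have hcov : Hindman.FS a ⊆ ⋃₀ (Set.range c) := by
    intro m hm
    obtain ⟨s, hs, rfl⟩ := FS_exists_finset hm
    obtain ⟨i, hi⟩ := hcover s hs
    exact ⟨c i, ⟨i, rfl⟩, s, hs, hsum s, hi⟩
  obtain ⟨c0, ⟨i, rfl⟩, b, hb⟩ :=
    Hindman.FS_partition_regular a (Set.range c) (Set.finite_range c) hcov
  have hbn : ∀ n, b.get n ∈ c i := fun n => hb (Hindman.FS.singleton b n)
  choose G hGne hGe hGA using hbn
  set S : ℕ → Finset ℕ := fun n => (G n).biUnion F with hS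
  have hSne : ∀ n, (S n).Nonempty := by
    intro n
    obtain ⟨k, hk⟩ := hGne n
    obtain ⟨x, hx⟩ := hF k
    exact ⟨x, Finset.mem_biUnion.mpr ⟨k, hk, hx⟩⟩
  have hSdisj : ∀ {p q : ℕ}, p ≠ q → Disjoint (S p) (S q) := by
    intro p q hpq
    have hmem : b.get p + b.get q ∈ c i := by
      have h2 : b.get p + b.get q = ∑ k ∈ ({p, q} : Finset ℕ), b.get k :=
        (Finset.sum_pair hpq).symm
      rw [h2]
      exact hb (Hindman.FS.finset_sum b _ (by simp))
    obtain ⟨G', _, hG'e, _⟩ := hmem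
    rw [hGe p, hGe q] at hG'e
    exact eFun_add_eq _ _ _ hG'e
  have hmin_inj : Function.Injective (fun n => (S n).min' (hSne n)) := by
    intro p q h
    by_contra hpq
    dsimp only at h
    have h2 := (S q).min'_mem (hSne q)
    rw [← h] at h2
    exact Finset.disjoint_left.mp (hSdisj hpq) ((S p).min'_mem (hSne p)) h2
  have step : ∀ p : ℕ, ∃ q : ℕ, ∀ x ∈ S p, ∀ y ∈ S q, x < y := by
    intro p
    obtain ⟨v, ⟨q, rfl⟩, hv⟩ :=
      (Set.infinite_range_of_injective hmin_inj).exists_gt ((S p).max' (hSne p))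
    exact ⟨q, fun x hx y hy =>
      lt_of_le_of_lt (Finset.le_max' _ x hx) (lt_of_lt_of_le hv ((S q).min'_le y hy))⟩
  let σ : ℕ → ℕ := fun n => Nat.rec 0 (fun _ prev => Classical.choose (step prev)) n
  have hσ : ∀ n, ∀ x ∈ S (σ n), ∀ y ∈ S (σ (n + 1)), x < y := fun n =>
    Classical.choose_spec (step (σ n))
  have hσchain : ∀ {p q : ℕ}, p < q → ∀ x ∈ S (σ p), ∀ y ∈ S (σ q), x < y :=
    fun {p q} => chain_lt (fun n => S (σ n)) (fun n => hSne (σ n)) hσ p q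
  have hσSdisj : ∀ {p q : ℕ}, p ≠ q → Disjoint (S (σ p)) (S (σ q)) := by
    intro p q hpq
    rw [Finset.disjoint_left]
    intro x hx hx'
    rcases hpq.lt_or_gt with h | h
    · exact absurd (hσchain h x hx x hx') (lt_irrefl x)
    · exact absurd (hσchain h x hx' x hx) (lt_irrefl x)
  have hσinj : Function.Injective σ := by
    intro p q h
    by_contra hpq
    obtain ⟨x, hx⟩ := hSne (σ p)
    have hx' : x ∈ S (σ q) := h ▸ hx
    exact Finset.disjoint_left.mp (hσSdisj hpq) hx hx'
  refine ⟨i, fun n => G (σ n), fun n => hGne (σ n), hσ, ?_⟩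
  intro H hH
  have hsum2 : ∑ n ∈ H, b.get (σ n) = eFun (H.biUnion fun n => S (σ n)) := by
    rw [eFun_biUnion _ _ (fun x _ y _ hxy => hσSdisj hxy)]
    exact Finset.sum_congr rfl fun n _ => hGe (σ n)
  have hmem : ∑ n ∈ H, b.get (σ n) ∈ c i := by
    rw [← Finset.sum_image (fun x _ y _ h => hσinj h)]
    exact hb (Hindman.FS.finset_sum b _ (hH.image σ))
  obtain ⟨G', _, hG'e, hG'A⟩ := hmem
  have hkey : (H.biUnion fun n => S (σ n)) = G'.biUnion F :=
    eFun_injective (hsum2.symm.trans hG'e)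
  rw [show (H.biUnion fun n => (G (σ n)).biUnion F) = G'.biUnion F from hkey]
  exact hG'A
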